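/- Let j < k be natural numbers, and on a probability space let e_j : Ω → ℝⁿ, v_{2,j} : Ω → ℝ^l, v_{2,k} : Ω → ℝ^l and v'_ℓ : Ω → ℝⁿ (for ℓ = j, …, k−1) be zero-mean square-integrable random vectors. Let Φ_ℓ (n×n, for ℓ = j,…,k−1), Γ_j, Γ_k (p×l), C₂ (l×n), G₂ (n×p₂), M₂ (p₂×l), Ā (n×n) be real matrices, let P be a symmetric positive semidefinite n×n matrix and R₂ a symmetric positive definite l×l matrix. Define Φ_{k|i} = Φ_{k−1}⋯Φ_i for i ≤ k−1 and Φ_{k|k} = I, and set e_k = Φ_{k|j} e_j + Σ_{ℓ=j}^{k−1} Φ_{k|ℓ+1} v'_ℓ. Define R̃* = C₂ P C₂ᵀ + R₂ − C₂ G₂ M₂ R₂ − R₂ M₂ᵀ G₂ᵀ C₂ᵀ, assume Γ_j R̃* Γ_jᵀ is invertible, set the optimal gain L̃ = (P C₂ᵀ − G₂ M₂ R₂) Γ_jᵀ (Γ_j R̃* Γ_jᵀ)⁻¹, and assume Φ_j = Ā (I − L̃ Γ_j C₂). Assume the cross-covariance conditions: E[v'_ℓ e_jᵀ] = 0 and E[v'_ℓ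 v_{2,j}ᵀ] = 0 for all ℓ with j < ℓ ≤ k−1; E[v'_j e_jᵀ] = Ā L̃ Γ_j R₂ M₂ᵀ G₂ᵀ; E[v'_j v_{2,j}ᵀ] = −Ā L̃ Γ_j R₂; E[e_j e_jᵀ] = P; E[v_{2,j} v_{2,j}ᵀ] = R₂; E[e_j v_{2,j}ᵀ] = −G₂ M₂ R₂; E[v_{2,k} e_jᵀ] = 0; and E[v_{2,k} v_{2,j}ᵀ] = 0. Define the generalized innovations ν_j = Γ_j (C₂ e_j + v_{2,j}) and ν_k = Γ_k (C₂' e_k + v_{2,k}) for any l×n matrix C₂'. Then the cross-covariance vanishes: E[ν_k ν_jᵀ] = 0 (the p×p zero matrix). This is the whiteness property of the generalized innovation of the optimal input-and-state filter (Theorem 1, off-diagonal part). -/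

import Mathlib

open MeasureTheory Matrix
open scoped ProbabilityTheory

/-- Cross-covariance matrix `E[X Yᵀ]` of two (zero-mean) random vectors. -/
noncomputable def crossCov {Ω : Type*} [MeasureSpace Ω]
    {a b : ℕ} (X : Ω → Fin a → ℝ) (Y : Ω → Fin b → ℝ) : Matrix (Fin a) (Fin b) ℝ :=
  Matrix.of fun i j => ∫ ω, X ω i * Y ω j

/-- `chain Φ i k = Φ_{k-1} ⋯ Φ_i` (equal to `1` when `k ≤ i`), i.e. the state-transition
matrix `Φ_{k|i}` of the error system. -/
def chain {n : ℕ} (Φ : ℕ → Matrix (Fin n) (Fin n) ℝ) (i : ℕ) : ℕ → Matrix (Fin n) (Fin n) ℝ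
  | 0 => 1
  | m + 1 => if i ≤ m then Φ m * chain Φ i m else 1

section Aux

lemma chain_self {n : ℕ} (Φ : ℕ → Matrix (Fin n) (Fin n) ℝ) (i : ℕ) : chain Φ i i = 1 := by
  cases i with
  | zero => rfl
  | succ m => simp [chain]

lemma chain_split {n : ℕ} (Φ : ℕ → Matrix (Fin n) (Fin n) ℝ) {i k : ℕ} (h : i < k) :
    chain Φ i k = chain Φ (i + 1) k * Φ i := by
  induction k with
  | zero => omega
  | succ m ih =>
    by_cases hm : i = m
    · subst hm
      simp [chain, chain_self]
    · have him : i < m := by omega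
      have h1 : chain Φ i (m + 1) = Φ m * chain Φ i m := by simp [chain, him.le]
      have h2 : chain Φ (i + 1) (m + 1) = Φ m * chain Φ (i + 1) m := by
        simp [chain, Nat.succ_le_of_lt him]
      rw [h1, ih him, h2, Matrix.mul_assoc]

variable {Ω : Type*} [MeasureSpace Ω]

lemma int_mul {f g : Ω → ℝ} (hf : MemLp f 2 ℙ) (hg : MemLp g 2 ℙ) :
    Integrable (fun ω => f ω * g ω) ℙ := by
  have h1 : Integrable (fun ω => (f ω + g ω) ^ 2) ℙ := by
    simpa using (hf.add hg).integrable_sq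
  have h2 := hf.integrable_sq
  have h3 := hg.integrable_sq
  have he : (fun ω => f ω * g ω) = fun ω => ((f ω + g ω) ^ 2 - f ω ^ 2 - g ω ^ 2) / 2 := by
    funext ω; ring
  rw [he]
  exact ((h1.sub h2).sub h3).div_const 2

lemma memLp_mulVec {c d : ℕ} (A : Matrix (Fin c) (Fin d) ℝ) (X : Ω → Fin d → ℝ)
    (hX : ∀ i, MemLp (fun ω => X ω i) 2 ℙ) (i : Fin c) :
    MemLp (fun ω => (A *ᵥ X ω) i) 2 ℙ := by
  have : (fun ω => (A *ᵥ X ω) i) = fun ω => ∑ m, A i m * X ω m := rfl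
  rw [this]
  exact memLp_finset_sum _ (fun m _ => (hX m).const_mul (A i m))

lemma crossCov_mulVec_left {a b c : ℕ} (A : Matrix (Fin a) (Fin c) ℝ)
    (X : Ω → Fin c → ℝ) (Y : Ω → Fin b → ℝ)
    (h : ∀ i j, Integrable (fun ω => X ω i * Y ω j) ℙ) :
    crossCov (fun ω => A *ᵥ X ω) Y = A * crossCov X Y := by
  ext i j
  show (∫ ω, (A *ᵥ X ω) i * Y ω j) = ∑ m, A i m * ∫ ω, X ω m * Y ω j
  have h1 : (fun ω => (A *ᵥ X ω) i * Y ω j)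
      = fun ω => ∑ m, A i m * (X ω m * Y ω j) := by
    funext ω
    show (∑ m, A i m * X ω m) * Y ω j = _
    rw [Finset.sum_mul]; simp [mul_assoc]
  rw [h1, integral_finset_sum _ (fun m _ => (h m j).const_mul (A i m))]
  simp [integral_const_mul]

lemma crossCov_mulVec_right {a b c : ℕ} (B : Matrix (Fin b) (Fin c) ℝ)
    (X : Ω → Fin a → ℝ) (Y : Ω → Fin c → ℝ)
    (h : ∀ i j, Integrable (fun ω => X ω i * Y ω j) ℙ) :
    crossCov X (fun ω => B *ᵥ Y ω) = crossCov X Y * Bᵀ := by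
  ext i j
  show (∫ ω, X ω i * (B *ᵥ Y ω) j) = ∑ m, (∫ ω, X ω i * Y ω m) * B j m
  have h1 : (fun ω => X ω i * (B *ᵥ Y ω) j)
      = fun ω => ∑ m, (X ω i * Y ω m) * B j m := by
    funext ω
    show X ω i * (∑ m, B j m * Y ω m) = _
    rw [Finset.mul_sum]; congr 1; funext m; ring
  rw [h1, integral_finset_sum _ (fun m _ => (h i m).mul_const (B j m))]
  simp [integral_mul_const]

lemma crossCov_add_left {a b : ℕ} (X X' : Ω → Fin a → ℝ) (Y : Ω → Fin b → ℝ)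
    (h : ∀ i j, Integrable (fun ω => X ω i * Y ω j) ℙ)
    (h' : ∀ i j, Integrable (fun ω => X' ω i * Y ω j) ℙ) :
    crossCov (fun ω => X ω + X' ω) Y = crossCov X Y + crossCov X' Y := by
  ext i j
  show (∫ ω, (X ω + X' ω) i * Y ω j) = (∫ ω, X ω i * Y ω j) + ∫ ω, X' ω i * Y ω j
  rw [← integral_add (h i j) (h' i j)]
  congr 1; funext ω; show (X ω i + X' ω i) * Y ω j = _; ring

lemma crossCov_add_right {a b : ℕ} (X : Ω → Fin a → ℝ) (Y Y' : Ω → Fin b → ℝ)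
    (h : ∀ i j, Integrable (fun ω => X ω i * Y ω j) ℙ)
    (h' : ∀ i j, Integrable (fun ω => X ω i * Y' ω j) ℙ) :
    crossCov X (fun ω => Y ω + Y' ω) = crossCov X Y + crossCov X Y' := by
  ext i j
  show (∫ ω, X ω i * (Y ω + Y' ω) j) = (∫ ω, X ω i * Y ω j) + ∫ ω, X ω i * Y' ω j
  rw [← integral_add (h i j) (h' i j)]
  congr 1; funext ω; show X ω i * (Y ω j + Y' ω j) = _; ring

lemma crossCov_sum_left {a b : ℕ} {ι : Type*} (s : Finset ι) (X : ι → Ω → Fin a → ℝ)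
    (Y : Ω → Fin b → ℝ)
    (h : ∀ ℓ ∈ s, ∀ i j, Integrable (fun ω => X ℓ ω i * Y ω j) ℙ) :
    crossCov (fun ω => ∑ ℓ ∈ s, X ℓ ω) Y = ∑ ℓ ∈ s, crossCov (X ℓ) Y := by
  ext i j
  simp only [crossCov, Matrix.of_apply, Matrix.sum_apply]
  rw [← integral_finset_sum _ (fun ℓ hℓ => h ℓ hℓ i j)]
  congr 1; funext ω
  rw [Finset.sum_apply, Finset.sum_mul]

end Aux

/-- **Theorem 1 (off-diagonal part): whiteness of the generalized innovation** of the optimal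
input-and-state filter: with the optimal gain `L̃ = (P C₂ᵀ − G₂ M₂ R₂) Γ_jᵀ (Γ_j R̃* Γ_jᵀ)⁻¹`
and `Φ_j = Ā (I − L̃ Γ_j C₂)`, the cross-covariance `E[ν_k ν_jᵀ]` of the generalized
innovations `ν_j = Γ_j (C₂ e_j + v_{2,j})`, `ν_k = Γ_k (C₂' e_k + v_{2,k})` vanishes for
`j < k`. -/
theorem generalized_innovation_whiteness
    {Ω : Type*} [MeasureSpace Ω] [IsProbabilityMeasure (ℙ : Measure Ω)]
    {n l p p₂ : ℕ} (j k : ℕ) (hjk : j < k)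
    (ej : Ω → Fin n → ℝ) (v2j v2k : Ω → Fin l → ℝ) (v' : ℕ → Ω → Fin n → ℝ)
    (hej_meas : ∀ i, MemLp (fun ω => ej ω i) 2 ℙ)
    (hv2j_meas : ∀ i, MemLp (fun ω => v2j ω i) 2 ℙ)
    (hv2k_meas : ∀ i, MemLp (fun ω => v2k ω i) 2 ℙ)
    (hv'_meas : ∀ ℓ, j ≤ ℓ → ℓ < k → ∀ i, MemLp (fun ω => v' ℓ ω i) 2 ℙ)
    (hej_mean : ∀ i, ∫ ω, ej ω i = 0)
    (hv2j_mean : ∀ i, ∫ ω, v2j ω i = 0)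
    (hv2k_mean : ∀ i, ∫ ω, v2k ω i = 0)
    (hv'_mean : ∀ ℓ, j ≤ ℓ → ℓ < k → ∀ i, ∫ ω, v' ℓ ω i = 0)
    (Φ : ℕ → Matrix (Fin n) (Fin n) ℝ)
    (Γj Γk : Matrix (Fin p) (Fin l) ℝ)
    (C₂ C₂' : Matrix (Fin l) (Fin n) ℝ)
    (G₂ : Matrix (Fin n) (Fin p₂) ℝ) (M₂ : Matrix (Fin p₂) (Fin l) ℝ)
    (Abar : Matrix (Fin n) (Fin n) ℝ)
    (P : Matrix (Fin n) (Fin n) ℝ) (hP : P.PosSemidef)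
    (R₂ : Matrix (Fin l) (Fin l) ℝ) (hR₂ : R₂.PosDef)
    (ek : Ω → Fin n → ℝ)
    (hek : ek = fun ω => chain Φ j k *ᵥ ej ω + ∑ ℓ ∈ Finset.Ico j k, chain Φ (ℓ + 1) k *ᵥ v' ℓ ω)
    (Rstar : Matrix (Fin l) (Fin l) ℝ)
    (hRstar : Rstar = C₂ * P * C₂ᵀ + R₂ - C₂ * G₂ * M₂ * R₂ - R₂ * M₂ᵀ * G₂ᵀ * C₂ᵀ)
    (hinv : IsUnit (Γj * Rstar * Γjᵀ))
    (L : Matrix (Fin n) (Fin p) ℝ)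
    (hL : L = (P * C₂ᵀ - G₂ * M₂ * R₂) * Γjᵀ * (Γj * Rstar * Γjᵀ)⁻¹)
    (hΦj : Φ j = Abar * (1 - L * Γj * C₂))
    (hv'ej : ∀ ℓ, j < ℓ → ℓ < k → crossCov (v' ℓ) ej = 0)
    (hv'v2j : ∀ ℓ, j < ℓ → ℓ < k → crossCov (v' ℓ) v2j = 0)
    (hv'jej : crossCov (v' j) ej = Abar * L * Γj * R₂ * M₂ᵀ * G₂ᵀ)
    (hv'jv2j : crossCov (v' j) v2j = -(Abar * L * Γj * R₂))
    (hejej : crossCov ej ej = P)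
    (hv2jv2j : crossCov v2j v2j = R₂)
    (hejv2j : crossCov ej v2j = -(G₂ * M₂ * R₂))
    (hv2kej : crossCov v2k ej = 0)
    (hv2kv2j : crossCov v2k v2j = 0)
    (νj νk : Ω → Fin p → ℝ)
    (hνj : νj = fun ω => Γj *ᵥ (C₂ *ᵥ ej ω + v2j ω))
    (hνk : νk = fun ω => Γk *ᵥ (C₂' *ᵥ ek ω + v2k ω)) :
    crossCov νk νj = 0 := by
  -- abbreviations
  set w : Ω → Fin l → ℝ := fun ω => C₂ *ᵥ ej ω + v2j ω with hw
  set z : Ω → Fin l → ℝ := fun ω => C₂' *ᵥ ek ω + v2k ω with hz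
  -- Memℒp facts
  have hwm : ∀ i, MemLp (fun ω => w ω i) 2 ℙ := by
    intro i
    exact ((memLp_mulVec C₂ ej hej_meas i).add (hv2j_meas i))
  have hekm : ∀ i, MemLp (fun ω => ek ω i) 2 ℙ := by
    intro i
    have heq : (fun ω => ek ω i)
        = fun ω => (chain Φ j k *ᵥ ej ω) i
            + ∑ ℓ ∈ Finset.Ico j k, (chain Φ (ℓ + 1) k *ᵥ v' ℓ ω) i := by
      rw [hek]; funext ω; simp [Finset.sum_apply]
    rw [heq]
    refine (memLp_mulVec _ _ hej_meas i).add (memLp_finset_sum _ (fun ℓ hℓ => ?_))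
    obtain ⟨h1, h2⟩ := Finset.mem_Ico.mp hℓ
    exact memLp_mulVec _ _ (hv'_meas ℓ h1 h2) i
  have hzm : ∀ i, MemLp (fun ω => z ω i) 2 ℙ := by
    intro i
    exact ((memLp_mulVec C₂' ek hekm i).add (hv2k_meas i))
  -- the integrability combiner
  have II : ∀ {a b : ℕ} (X : Ω → Fin a → ℝ) (Y : Ω → Fin b → ℝ),
      (∀ i, MemLp (fun ω => X ω i) 2 ℙ) → (∀ i, MemLp (fun ω => Y ω i) 2 ℙ) →
      ∀ i j', Integrable (fun ω => X ω i * Y ω j') ℙ :=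
    fun X Y hX hY i j' => int_mul (hX i) (hY j')
  have hΓjw : ∀ i, MemLp (fun ω => (Γj *ᵥ w ω) i) 2 ℙ := memLp_mulVec Γj w hwm
  -- key algebraic identity for the optimal gain
  have hdet := (Matrix.isUnit_iff_isUnit_det _).mp hinv
  have hLkey : L * (Γj * Rstar * Γjᵀ) = (P * C₂ᵀ - G₂ * M₂ * R₂) * Γjᵀ := by
    have h1 := Matrix.nonsing_inv_mul (Γj * Rstar * Γjᵀ) hdet
    rw [hL, Matrix.mul_assoc ((P * C₂ᵀ - G₂ * M₂ * R₂) * Γjᵀ), h1, Matrix.mul_one]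
  -- crossCov ej w
  have hejw : crossCov ej w = P * C₂ᵀ + -(G₂ * M₂ * R₂) := by
    have := crossCov_add_right ej (fun ω => C₂ *ᵥ ej ω) v2j
      (II ej _ hej_meas (memLp_mulVec C₂ ej hej_meas))
      (II ej v2j hej_meas hv2j_meas)
    rw [hw, this, crossCov_mulVec_right C₂ ej ej (II ej ej hej_meas hej_meas),
      hejej, hejv2j]
  -- crossCov (v' ℓ) w for ℓ ∈ Ico j k
  have hv'w : ∀ ℓ, j ≤ ℓ → ℓ < k →
      crossCov (v' ℓ) w = crossCov (v' ℓ) ej * C₂ᵀ + crossCov (v' ℓ) v2j := by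
    intro ℓ h1 h2
    have := crossCov_add_right (v' ℓ) (fun ω => C₂ *ᵥ ej ω) v2j
      (II (v' ℓ) _ (hv'_meas ℓ h1 h2) (memLp_mulVec C₂ ej hej_meas))
      (II (v' ℓ) v2j (hv'_meas ℓ h1 h2) hv2j_meas)
    rw [hw, this, crossCov_mulVec_right C₂ (v' ℓ) ej (II (v' ℓ) ej (hv'_meas ℓ h1 h2) hej_meas)]
  -- crossCov v2k w = 0
  have hv2kw : crossCov v2k w = 0 := by
    have := crossCov_add_right v2k (fun ω => C₂ *ᵥ ej ω) v2j
      (II v2k _ hv2k_meas (memLp_mulVec C₂ ej hej_meas))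
      (II v2k v2j hv2k_meas hv2j_meas)
    rw [hw, this, crossCov_mulVec_right C₂ v2k ej (II v2k ej hv2k_meas hej_meas),
      hv2kej, hv2kv2j]
    simp
  -- crossCov ek w
  have hekw : crossCov ek w
      = chain Φ j k * (P * C₂ᵀ + -(G₂ * M₂ * R₂))
        + chain Φ (j + 1) k * (Abar * L * Γj * R₂ * M₂ᵀ * G₂ᵀ * C₂ᵀ + -(Abar * L * Γj * R₂)) := by
    have hsum_meas : ∀ i, MemLp
        (fun ω => (∑ ℓ ∈ Finset.Ico j k, chain Φ (ℓ + 1) k *ᵥ v' ℓ ω) i) 2 ℙ := by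
      intro i
      have heq : (fun ω => (∑ ℓ ∈ Finset.Ico j k, chain Φ (ℓ + 1) k *ᵥ v' ℓ ω) i)
          = fun ω => ∑ ℓ ∈ Finset.Ico j k, (chain Φ (ℓ + 1) k *ᵥ v' ℓ ω) i := by
        funext ω; simp [Finset.sum_apply]
      rw [heq]
      refine memLp_finset_sum _ (fun ℓ hℓ => ?_)
      obtain ⟨h1, h2⟩ := Finset.mem_Ico.mp hℓ
      exact memLp_mulVec _ _ (hv'_meas ℓ h1 h2) i
    have hstep : crossCov ek w
        = crossCov (fun ω => chain Φ j k *ᵥ ej ω) w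
          + crossCov (fun ω => ∑ ℓ ∈ Finset.Ico j k, chain Φ (ℓ + 1) k *ᵥ v' ℓ ω) w := by
      rw [hek]
      exact crossCov_add_left _ _ w
        (II _ w (memLp_mulVec _ ej hej_meas) hwm)
        (II _ w hsum_meas hwm)
    rw [hstep, crossCov_mulVec_left _ ej w (II ej w hej_meas hwm), hejw,
      crossCov_sum_left (Finset.Ico j k) (fun ℓ ω => chain Φ (ℓ + 1) k *ᵥ v' ℓ ω) w
        (fun ℓ hℓ => by
          obtain ⟨h1, h2⟩ := Finset.mem_Ico.mp hℓ
          exact II _ w (memLp_mulVec _ _ (hv'_meas ℓ h1 h2)) hwm)]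
    congr 1
    have hterm : ∀ ℓ ∈ Finset.Ico j k,
        crossCov (fun ω => chain Φ (ℓ + 1) k *ᵥ v' ℓ ω) w
          = chain Φ (ℓ + 1) k * (crossCov (v' ℓ) ej * C₂ᵀ + crossCov (v' ℓ) v2j) := by
      intro ℓ hℓ
      obtain ⟨h1, h2⟩ := Finset.mem_Ico.mp hℓ
      rw [crossCov_mulVec_left _ (v' ℓ) w (II (v' ℓ) w (hv'_meas ℓ h1 h2) hwm),
        hv'w ℓ h1 h2]
    rw [Finset.sum_congr rfl hterm]
    rw [Finset.sum_eq_single_of_mem j (Finset.mem_Ico.mpr ⟨le_refl j, hjk⟩)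
      (fun ℓ hℓ hne => by
        obtain ⟨h1, h2⟩ := Finset.mem_Ico.mp hℓ
        have hlt : j < ℓ := lt_of_le_of_ne h1 (Ne.symm hne)
        rw [hv'ej ℓ hlt h2, hv'v2j ℓ hlt h2]; simp)]
    rw [hv'jej, hv'jv2j]
  -- crossCov z w
  have hzw : crossCov z w = C₂' * crossCov ek w := by
    have := crossCov_add_left (fun ω => C₂' *ᵥ ek ω) v2k w
      (II _ w (memLp_mulVec C₂' ek hekm) hwm) (II v2k w hv2k_meas hwm)
    rw [hz, this, crossCov_mulVec_left C₂' ek w (II ek w hekm hwm), hv2kw, add_zero]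
  -- assemble
  have hmain : crossCov νk νj = Γk * (crossCov z w * Γjᵀ) := by
    rw [hνk, hνj]
    have h1 : crossCov (fun ω => Γk *ᵥ z ω) (fun ω => Γj *ᵥ w ω)
        = Γk * crossCov z (fun ω => Γj *ᵥ w ω) :=
      crossCov_mulVec_left Γk z _ (II z _ hzm hΓjw)
    have h2 : crossCov z (fun ω => Γj *ᵥ w ω) = crossCov z w * Γjᵀ :=
      crossCov_mulVec_right Γj z w (II z w hzm hwm)
    rw [h1, h2]
  rw [hmain, hzw, hekw, chain_split Φ hjk, hΦj]
  have hexp : ((chain Φ (j + 1) k * (Abar * (1 - L * Γj * C₂))) * (P * C₂ᵀ + -(G₂ * M₂ * R₂))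
        + chain Φ (j + 1) k * (Abar * L * Γj * R₂ * M₂ᵀ * G₂ᵀ * C₂ᵀ + -(Abar * L * Γj * R₂))) * Γjᵀ
      = chain Φ (j + 1) k * Abar
        * ((P * C₂ᵀ - G₂ * M₂ * R₂) * Γjᵀ
          - L * (Γj * (C₂ * P * C₂ᵀ + R₂ - C₂ * G₂ * M₂ * R₂ - R₂ * M₂ᵀ * G₂ᵀ * C₂ᵀ) * Γjᵀ)) := by
    simp only [Matrix.mul_add, Matrix.add_mul, Matrix.mul_sub, Matrix.sub_mul,
      Matrix.mul_one, Matrix.one_mul, Matrix.neg_mul, Matrix.mul_neg,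
      Matrix.mul_assoc, sub_eq_add_neg]
    abel
  rw [Matrix.mul_assoc C₂', hexp, ← hRstar, hLkey, sub_self, Matrix.mul_zero, Matrix.mul_zero, Matrix.mul_zero]
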